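/- Assume α̃ < 1. Then 0 < r < 1, and the 2×2 real matrix R = [[r, rθ/(θ̄·p̄(1)·μ_b·(1−r))], [0, α̃]] satisfies the matrix quadratic equation R = R²B₂' + R·A₁' + C₁', where A₁' = [[θ̄(1−p(0)μ̄_v−p̄(0)μ_v), θ(1−p(0)μ̄_v−p̄(0)μ_v)], [0, 1−p(1)μ̄_b−p̄(1)μ_b]], C₁' = [[p(0)θ̄μ̄_v, p(0)θμ̄_v], [0, p(1)μ̄_b]], and B₂' = [[p̄(0)θ̄μ_v, p̄(0)θμ_v], [0, p̄(1)μ_b]]. Moreover all entries of R are nonnegative. -/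

import Mathlib

set_option maxHeartbeats 1000000 in
/-- Geo/Geo/1 with multiple working vacations, partially observable case.
If α̃ < 1, then 0 < r < 1, the matrix R satisfies R = R²B₂' + R A₁' + C₁',
and all entries of R are nonnegative. -/

theorem stmt_0
    (p μb μv θ q0 q1 p0 p1 al be r : ℝ)
    (hp : p ∈ Set.Ioo (0:ℝ) 1) (hμb : μb ∈ Set.Ioo (0:ℝ) 1)
    (hμv : μv ∈ Set.Ioo (0:ℝ) 1) (hθ : θ ∈ Set.Ioo (0:ℝ) 1)
    (hq0 : q0 ∈ Set.Icc (0:ℝ) 1) (hq1 : q1 ∈ Set.Icc (0:ℝ) 1)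
    (hp0 : p0 = p * q0) (hp1 : p1 = p * q1)
    (hp0m : p0 ∈ Set.Ioo (0:ℝ) 1) (hp1m : p1 ∈ Set.Ioo (0:ℝ) 1)
    (hal : al = p1 * (1 - μb) / ((1 - p1) * μb))
    (hbe : be = θ / (1 - θ))
    (hr : r = (be + p0 * (1 - μv) + (1 - p0) * μv -
        Real.sqrt ((be + p0 * (1 - μv) + (1 - p0) * μv) ^ 2 -
          4 * p0 * (1 - p0) * μv * (1 - μv))) / (2 * (1 - p0) * μv))
    (hal1 : al < 1) :
    (0 < r ∧ r < 1) ∧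
    (!![r, r * θ / ((1 - θ) * (1 - p1) * μb * (1 - r)); 0, al] : Matrix (Fin 2) (Fin 2) ℝ)
      = (!![r, r * θ / ((1 - θ) * (1 - p1) * μb * (1 - r)); 0, al] : Matrix (Fin 2) (Fin 2) ℝ) ^ 2 *
          (!![(1 - p0) * (1 - θ) * μv, (1 - p0) * θ * μv; 0, (1 - p1) * μb] : Matrix (Fin 2) (Fin 2) ℝ)
        + (!![r, r * θ / ((1 - θ) * (1 - p1) * μb * (1 - r)); 0, al] : Matrix (Fin 2) (Fin 2) ℝ) *
          (!![(1 - θ) * (1 - p0 * (1 - μv) - (1 - p0) * μv),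
              θ * (1 - p0 * (1 - μv) - (1 - p0) * μv);
              0, 1 - p1 * (1 - μb) - (1 - p1) * μb] : Matrix (Fin 2) (Fin 2) ℝ)
        + (!![p0 * (1 - θ) * (1 - μv), p0 * θ * (1 - μv); 0, p1 * (1 - μb)] : Matrix (Fin 2) (Fin 2) ℝ) ∧
    ∀ i j : Fin 2,
      0 ≤ (!![r, r * θ / ((1 - θ) * (1 - p1) * μb * (1 - r)); 0, al] : Matrix (Fin 2) (Fin 2) ℝ) i j := by
  obtain ⟨hp0l, hp0r⟩ := hp0m
  obtain ⟨hp1l, hp1r⟩ := hp1m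
  obtain ⟨hθl, hθr⟩ := hθ
  obtain ⟨hμbl, hμbr⟩ := hμb
  obtain ⟨hμvl, hμvr⟩ := hμv
  have h1θ : (0:ℝ) < 1 - θ := by linarith
  have h1p0 : (0:ℝ) < 1 - p0 := by linarith
  have h1p1 : (0:ℝ) < 1 - p1 := by linarith
  have h1μv : (0:ℝ) < 1 - μv := by linarith
  have h1μb : (0:ℝ) < 1 - μb := by linarith
  have hbe' : 0 < be := by rw [hbe]; positivity
  have ha : 0 < (1 - p0) * μv := by positivity
  have hc : 0 < p0 * (1 - μv) := by positivity
  set S : ℝ := be + p0 * (1 - μv) + (1 - p0) * μv with hS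
  set D : ℝ := S ^ 2 - 4 * p0 * (1 - p0) * μv * (1 - μv) with hD
  have hSac : S = be + p0 * (1 - μv) + (1 - p0) * μv := rfl
  have hDpos : 0 < D := by
    have h := sq_nonneg ((1 - p0) * μv - p0 * (1 - μv))
    rw [hD, hSac]
    nlinarith [mul_pos ha hc, sq_nonneg be]
  set t : ℝ := Real.sqrt D with htdef
  have ht2 : t ^ 2 = D := Real.sq_sqrt hDpos.le
  have ht0 : 0 ≤ t := Real.sqrt_nonneg D
  have hSpos : 0 < S := by rw [hSac]; positivity
  have ht0' : 0 < t := Real.sqrt_pos.mpr hDpos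
  have htS : t < S := by
    rw [htdef]
    refine (Real.sqrt_lt' hSpos).mpr ?_
    rw [hD, hSac]
    nlinarith [mul_pos ha hc]
  have hr' : r = (S - t) / (2 * (1 - p0) * μv) := hr
  have hr0 : 0 < r := by
    rw [hr']
    apply div_pos (by linarith)
    positivity
  have hSlt : S - 2 * ((1 - p0) * μv) < t := by
    rcases le_or_gt (S - 2 * ((1 - p0) * μv)) 0 with h | h
    · linarith
    · rw [htdef]
      refine (Real.lt_sqrt h.le).mpr ?_
      rw [hD, hSac]
      nlinarith [mul_pos ha hbe']
  have hr1 : r < 1 := by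
    rw [hr']
    rw [div_lt_one (by positivity)]
    linarith
  have hr2 : 2 * ((1 - p0) * μv) * r = S - t := by
    rw [hr']; field_simp
  have hquad4 : 4 * ((1 - p0) * μv) *
      ((1 - p0) * μv * r ^ 2 - S * r + p0 * (1 - μv)) = 0 := by
    linear_combination (2 * ((1 - p0) * μv) * r - S - t) * hr2 + ht2
  have hquad : (1 - p0) * μv * r ^ 2 - S * r + p0 * (1 - μv) = 0 := by
    rcases mul_eq_zero.mp hquad4 with h | h
    · exact absurd h (by positivity)
    · exact h
  have hbe2 : be * (1 - θ) = θ := by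
    rw [hbe]; field_simp
  have hquadθ : (1 - θ) * ((1 - p0) * μv) * r ^ 2
      - (θ + (1 - θ) * (p0 * (1 - μv) + (1 - p0) * μv)) * r
      + (1 - θ) * (p0 * (1 - μv)) = 0 := by
    rw [hSac] at hquad
    linear_combination (1 - θ) * hquad + r * hbe2
  have hal2 : al * ((1 - p1) * μb) = p1 * (1 - μb) := by
    rw [hal]; field_simp
  have h1r : (0:ℝ) < 1 - r := by linarith
  set s : ℝ := r * θ / ((1 - θ) * (1 - p1) * μb * (1 - r)) with hsdef
  have hs2 : s * ((1 - θ) * (1 - p1) * μb * (1 - r)) = r * θ := by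
    rw [hsdef]; field_simp
  refine ⟨⟨hr0, hr1⟩, ?_, ?_⟩
  · ext i j
    fin_cases i <;> fin_cases j <;>
      simp [pow_two, Matrix.mul_apply, Fin.sum_univ_two]
    · linear_combination -hquadθ
    · refine mul_left_cancel₀ (by positivity : (1 - θ) ≠ 0) ?_
      linear_combination (-θ) * hquadθ - (1 - θ) * s * hal2 + hs2
    · linear_combination (1 - al) * hal2
  · intro i j
    fin_cases i <;> fin_cases j <;> simp [hal]
    · exact hr0.le
    · positivity
    · positivity
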